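/- Let 0 ≤ i ≤ j with i + j ≤ n. The set-inclusion matrix W_{i,j}(n), whose rows are indexed by i-subsets and columns by j-subsets of {1,...,n}, with entry 1 if the row subset is contained in the column subset and 0 otherwise, has rank C(n,i) over ℚ. -/

import Mathlib

open Finset

/-- Coefficient `N(r,d)`: for `w ⊆ C` with `|w| = r`, `|C| = n - i`, the number of
`(j-i)`-subsets of `C` meeting `w` in exactly `d` points. -/
def dcCoef (n i j r d : ℕ) : ℕ :=
  if d ≤ j - i then r.choose d * (n - i - r).choose (j - i - d) else 0

/-- Triangular recursion defining the entries of the right inverse of the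
inclusion matrix. -/
noncomputable def dcB (n i j : ℕ) : ℕ → ℚ
  | r =>
    ((if r = 0 then (1 : ℚ) else 0) -
        ∑ d ∈ (Finset.Icc 1 r).attach,
          (dcCoef n i j r d.1 : ℚ) * dcB n i j (r - d.1)) /
      (dcCoef n i j r 0 : ℚ)
  termination_by r => r
  decreasing_by
    have := Finset.mem_Icc.1 d.2
    omega

lemma dcB_key (n i j : ℕ) (hij : i ≤ j) (hn : i + j ≤ n) (r : ℕ) (hr : r ≤ i) :
    ∑ d ∈ Finset.range (r + 1), (dcCoef n i j r d : ℚ) * dcB n i j (r - d)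
      = if r = 0 then 1 else 0 := by
  have hc0 : 0 < dcCoef n i j r 0 := by
    have h1 : j - i ≤ n - i - r := by omega
    simp only [dcCoef, if_pos (Nat.zero_le _), Nat.choose_zero_right, one_mul, Nat.sub_zero]
    exact Nat.choose_pos h1
  have hc0' : (dcCoef n i j r 0 : ℚ) ≠ 0 := by positivity
  have hsum : ∑ d ∈ Finset.Icc 1 r, (dcCoef n i j r d : ℚ) * dcB n i j (r - d)
      = ∑ d ∈ (Finset.Icc 1 r).attach, (dcCoef n i j r d.1 : ℚ) * dcB n i j (r - d.1) :=
    (Finset.sum_attach _ _).symm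
  have hb : dcB n i j r = ((if r = 0 then (1 : ℚ) else 0) -
      ∑ d ∈ (Finset.Icc 1 r).attach, (dcCoef n i j r d.1 : ℚ) * dcB n i j (r - d.1)) /
      (dcCoef n i j r 0 : ℚ) := by
    rw [dcB]
  have hsplit : Finset.range (r + 1) = insert 0 (Finset.Icc 1 r) := by
    ext x; simp [Finset.mem_Icc, Nat.lt_succ_iff]; omega
  rw [hsplit, Finset.sum_insert (by simp), Nat.sub_zero, hb]
  field_simp
  rw [← hsum]
  ring

/-- The number of `m`-subsets of `C` meeting a subset `w ⊆ C` in exactly `d` points. -/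
lemma dcCount {α : Type*} [DecidableEq α] (C w : Finset α) (hw : w ⊆ C) (m d : ℕ) :
    ((C.powersetCard m).filter (fun u => (u ∩ w).card = d)).card =
      if d ≤ m then w.card.choose d * ((C \ w).card).choose (m - d) else 0 := by
  by_cases hdm : d ≤ m
  · rw [if_pos hdm]
    have : ((C.powersetCard m).filter (fun u => (u ∩ w).card = d)).card
        = ((w.powersetCard d) ×ˢ ((C \ w).powersetCard (m - d))).card := by
      apply Finset.card_nbij' (fun u => (u ∩ w, u \ w)) (fun p => p.1 ∪ p.2)
      · intro u hu
        simp only [Finset.mem_coe, Finset.mem_filter, Finset.mem_powersetCard] at hu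
        obtain ⟨⟨huC, hucard⟩, hud⟩ := hu
        simp only [Finset.mem_coe, Finset.mem_product, Finset.mem_powersetCard]
        refine ⟨⟨Finset.inter_subset_right, hud⟩, ?_, ?_⟩
        · exact fun x hx => Finset.mem_sdiff.2 ⟨huC (Finset.mem_sdiff.1 hx).1,
            (Finset.mem_sdiff.1 hx).2⟩
        · have := Finset.card_inter_add_card_sdiff u w
          omega
      · intro p hp
        simp only [Finset.mem_coe, Finset.mem_product, Finset.mem_powersetCard] at hp
        obtain ⟨⟨hAw, hAd⟩, hBC, hBm⟩ := hp
        have hdisj : Disjoint p.1 p.2 := by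
          refine Finset.disjoint_left.2 fun x hx hx' => ?_
          exact (Finset.mem_sdiff.1 (hBC hx')).2 (hAw hx)
        simp only [Finset.mem_coe, Finset.mem_filter, Finset.mem_powersetCard]
        refine ⟨⟨?_, ?_⟩, ?_⟩
        · exact Finset.union_subset (hAw.trans hw) (hBC.trans (Finset.sdiff_subset))
        · rw [Finset.card_union_of_disjoint hdisj, hAd, hBm]; omega
        · have : (p.1 ∪ p.2) ∩ w = p.1 := by
            ext x
            simp only [Finset.mem_inter, Finset.mem_union]
            constructor
            · rintro ⟨hx | hx, hxw⟩
              · exact hx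
              · exact absurd hxw (Finset.mem_sdiff.1 (hBC hx)).2
            · exact fun hx => ⟨Or.inl hx, hAw hx⟩
          rw [this, hAd]
      · intro u hu
        simp only [Finset.mem_coe, Finset.mem_filter, Finset.mem_powersetCard] at hu
        exact sup_inf_sdiff u w
      · intro p hp
        simp only [Finset.mem_coe, Finset.mem_product, Finset.mem_powersetCard] at hp
        obtain ⟨⟨hAw, hAd⟩, hBC, hBm⟩ := hp
        have h1 : (p.1 ∪ p.2) ∩ w = p.1 := by
          ext x
          simp only [Finset.mem_inter, Finset.mem_union]
          constructor
          · rintro ⟨hx | hx, hxw⟩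
            · exact hx
            · exact absurd hxw (Finset.mem_sdiff.1 (hBC hx)).2
          · exact fun hx => ⟨Or.inl hx, hAw hx⟩
        have h2 : (p.1 ∪ p.2) \ w = p.2 := by
          ext x
          simp only [Finset.mem_sdiff, Finset.mem_union]
          constructor
          · rintro ⟨hx | hx, hxw⟩
            · exact absurd (hAw hx) hxw
            · exact hx
          · exact fun hx => ⟨Or.inr hx, (Finset.mem_sdiff.1 (hBC hx)).2⟩
        show ((p.1 ∪ p.2) ∩ w, (p.1 ∪ p.2) \ w) = p
        rw [h1, h2]
    rw [this, Finset.card_product, Finset.card_powersetCard, Finset.card_powersetCard]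
  · rw [if_neg hdm]
    rw [Finset.card_eq_zero, Finset.filter_eq_empty_iff]
    intro u hu
    rw [Finset.mem_powersetCard] at hu
    have : (u ∩ w).card ≤ u.card := Finset.card_le_card Finset.inter_subset_left
    omega

lemma dcMain (n i j : ℕ) (hij : i ≤ j) (hn : i + j ≤ n)
    (s s' : Finset (Fin n)) (hs : s.card = i) (hs' : s'.card = i) :
    ∑ t ∈ (univ : Finset (Fin n)).powersetCard j,
      (if s ⊆ t then (1:ℚ) else 0) * dcB n i j (i - (t ∩ s').card)
      = if s = s' then 1 else 0 := by
  set k := (s ∩ s').card with hkdef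
  set r := i - k with hrdef
  set w := s' \ s with hwdef
  have hk : k ≤ i := hs ▸ Finset.card_le_card Finset.inter_subset_left
  have hwc : w.card = r := by
    have h1 := Finset.card_inter_add_card_sdiff s' s
    rw [Finset.inter_comm] at h1
    rw [hwdef]
    omega
  have hwcompl : w ⊆ sᶜ := fun x hx =>
    Finset.mem_compl.2 (Finset.mem_sdiff.1 hx).2
  have hccard : (sᶜ : Finset (Fin n)).card = n - i := by
    rw [Finset.card_compl, hs, Fintype.card_fin]
  have hcw : ((sᶜ : Finset (Fin n)) \ w).card = n - i - r := by
    rw [Finset.card_sdiff_of_subset hwcompl, hccard, hwc]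
  -- step 1: restrict to t ⊇ s
  simp_rw [ite_mul, one_mul, zero_mul, ← Finset.sum_filter]
  -- step 2: reindex by u = t \ s
  rw [Finset.sum_nbij' (i := fun t => t \ s) (j := fun u => s ∪ u)
    (t := (sᶜ : Finset (Fin n)).powersetCard (j - i))
    (g := fun u => dcB n i j (r - (u ∩ w).card))
    (by
      intro t ht
      simp only [Finset.mem_filter, Finset.mem_powersetCard] at ht
      obtain ⟨⟨-, htc⟩, hst⟩ := ht
      simp only [Finset.mem_powersetCard]
      exact ⟨fun x hx => Finset.mem_compl.2 (Finset.mem_sdiff.1 hx).2,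
        by rw [Finset.card_sdiff_of_subset hst, htc, hs]⟩)
    (by
      intro u hu
      simp only [Finset.mem_powersetCard] at hu
      obtain ⟨huc, hucard⟩ := hu
      have hdisj : Disjoint s u := Finset.disjoint_left.2
        fun x hx hx' => Finset.mem_compl.1 (huc hx') hx
      simp only [Finset.mem_filter, Finset.mem_powersetCard]
      exact ⟨⟨Finset.subset_univ _,
        by rw [Finset.card_union_of_disjoint hdisj, hs, hucard]; omega⟩,
        Finset.subset_union_left⟩)
    (by
      intro t ht
      simp only [Finset.mem_filter, Finset.mem_powersetCard] at ht
      exact Finset.union_sdiff_of_subset ht.2)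
    (by
      intro u hu
      simp only [Finset.mem_powersetCard] at hu
      exact Finset.union_sdiff_cancel_left (Finset.disjoint_left.2
        fun x hx hx' => Finset.mem_compl.1 (hu.1 hx') hx))
    (by
      intro t ht
      simp only [Finset.mem_filter, Finset.mem_powersetCard] at ht
      obtain ⟨⟨-, htc⟩, hst⟩ := ht
      have hdecomp : t ∩ s' = (s ∩ s') ∪ ((t \ s) ∩ w) := by
        ext x
        have hx0 : x ∈ s → x ∈ t := fun h => hst h
        simp only [Finset.mem_inter, Finset.mem_union, Finset.mem_sdiff, hwdef]
        tauto
      have hdisj : Disjoint (s ∩ s') ((t \ s) ∩ w) := Finset.disjoint_left.2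
        fun x hx hx' => (Finset.mem_sdiff.1 (Finset.mem_inter.1 hx').1).2
          (Finset.mem_inter.1 hx).1
      have hle : ((t \ s) ∩ w).card ≤ r := hwc ▸
        Finset.card_le_card Finset.inter_subset_right
      show dcB n i j (i - (t ∩ s').card) = dcB n i j (r - ((t \ s) ∩ w).card)
      rw [hdecomp, Finset.card_union_of_disjoint hdisj, ← hkdef]
      congr 1
      omega)]
  -- step 3: fiberwise by d = (u ∩ w).card
  rw [← Finset.sum_fiberwise_of_maps_to' (g := fun u => (u ∩ w).card)
    (t := Finset.range (r + 1))
    (f := fun d => dcB n i j (r - d))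
    (fun u hu => Finset.mem_range.2 (Nat.lt_succ_of_le (hwc ▸
      Finset.card_le_card Finset.inter_subset_right)))]
  -- step 4: count fibers
  have hcount : ∀ d ∈ Finset.range (r + 1),
      (∑ u ∈ ((sᶜ : Finset (Fin n)).powersetCard (j - i)).filter
          (fun u => (u ∩ w).card = d), dcB n i j (r - d))
        = (dcCoef n i j r d : ℚ) * dcB n i j (r - d) := by
    intro d _
    rw [Finset.sum_const, dcCount _ _ hwcompl, hwc, hcw, nsmul_eq_mul]
    simp only [dcCoef]
  rw [Finset.sum_congr rfl hcount, dcB_key n i j hij hn r (by omega)]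
  have : r = 0 ↔ s = s' := by
    constructor
    · intro h0
      have hk' : k = i := by omega
      have hsub : s ∩ s' = s := Finset.eq_of_subset_of_card_le
        Finset.inter_subset_left (by rw [hs, ← hkdef, hk'])
      exact Finset.eq_of_subset_of_card_le
        (by rw [← hsub]; exact Finset.inter_subset_right) (by rw [hs, hs'])
    · rintro rfl
      have : k = i := by rw [hkdef, Finset.inter_self, hs]
      omega
  simp [this]

/-- de Caen's theorem: for `0 ≤ i ≤ j` with `i + j ≤ n`, the set-inclusion
matrix `W_{i,j}(n)` (rows indexed by `i`-subsets, columns by `j`-subsets of an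
`n`-set, entry `1` iff the row subset is contained in the column subset) has
rank `C(n,i)` over `ℚ`. -/
theorem stmt11 (n i j : ℕ) (hij : i ≤ j) (hn : i + j ≤ n) :
    Matrix.rank (fun (s : {s : Finset (Fin n) // s.card = i})
        (t : {t : Finset (Fin n) // t.card = j}) =>
          if s.1 ⊆ t.1 then (1 : ℚ) else 0) = n.choose i := by
  classical
  set W : Matrix {s : Finset (Fin n) // s.card = i} {t : Finset (Fin n) // t.card = j} ℚ :=
    fun s t => if s.1 ⊆ t.1 then (1 : ℚ) else 0 with hW
  set N : Matrix {t : Finset (Fin n) // t.card = j} {s : Finset (Fin n) // s.card = i} ℚ :=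
    fun t s' => dcB n i j (i - (t.1 ∩ s'.1).card) with hN
  have hWN : W * N = 1 := by
    ext s s'
    rw [Matrix.mul_apply, Matrix.one_apply]
    have h2 : ∑ t : {t : Finset (Fin n) // t.card = j},
        (if s.1 ⊆ t.1 then (1:ℚ) else 0) * dcB n i j (i - (t.1 ∩ s'.1).card)
        = if s.1 = s'.1 then 1 else 0 := by
      rw [← Finset.sum_subtype ((univ : Finset (Fin n)).powersetCard j)
        (fun t => Finset.mem_powersetCard_univ)
        (fun t => (if s.1 ⊆ t then (1:ℚ) else 0) * dcB n i j (i - (t ∩ s'.1).card))]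
      exact dcMain n i j hij hn s.1 s'.1 s.2 s'.2
    rw [show (∑ t, W s t * N t s') = ∑ t : {t : Finset (Fin n) // t.card = j},
        (if s.1 ⊆ t.1 then (1:ℚ) else 0) * dcB n i j (i - (t.1 ∩ s'.1).card) from rfl, h2]
    simp [Subtype.ext_iff]
  have hcard : Fintype.card {s : Finset (Fin n) // s.card = i} = n.choose i := by
    rw [Fintype.card_finset_len, Fintype.card_fin]
  refine le_antisymm ?_ ?_
  · exact hcard ▸ W.rank_le_card_height
  · calc n.choose i = (W * N).rank := by rw [hWN, Matrix.rank_one, hcard]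
    _ ≤ W.rank := Matrix.rank_mul_le_left W N
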